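/- For M(θ) as in the CL stationary correlation, M(θ₁ − θ₂) ≠ 1 for some (θ₁,θ₂) (whenever σ > 0); hence the stationary two-particle distribution F₂(θ₁,θ₂) = M(θ₁−θ₂) is not the product of its one-particle marginals (which are uniform), i.e., the equilibrium is not chaotic. -/

import Mathlib

open Real

/-- The CL stationary correlation function on `[0, 2π]`, with `σ̄ = σ/√2`. -/
noncomputable def Mcl (σ θ : ℝ) : ℝ :=
  let sb := σ / Real.sqrt 2
  (1 / (2 * sb * (Real.exp (2 * Real.pi / sb) - 1))) *
    (Real.exp (θ / sb) + Real.exp ((2 * Real.pi - θ) / sb))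

/-- The `2π`-periodic extension of `Mcl`. -/
noncomputable def MclPer (σ θ : ℝ) : ℝ :=
  Mcl σ (2 * Real.pi * Int.fract (θ / (2 * Real.pi)))

/-- The CL equilibrium is not chaotic: the stationary two-particle distribution
`F₂(θ₁,θ₂) = M(θ₁−θ₂)` is not the product of its (uniform) one-particle marginals,
since `M(θ₁ − θ₂) ≠ 1 = 1·1` for some `(θ₁, θ₂)`. -/
theorem CL_equilibrium_not_chaotic (σ : ℝ) (hσ : 0 < σ) :
    ∃ θ₁ θ₂ : ℝ, MclPer σ (θ₁ - θ₂) ≠ (1 : ℝ) * 1 := by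
  by_contra hcon
  push_neg at hcon
  set sb := σ / Real.sqrt 2 with hsb
  have hsbpos : 0 < sb := div_pos hσ (Real.sqrt_pos.mpr (by norm_num))
  have hπ : 0 < Real.pi := Real.pi_pos
  -- evaluate at θ = 0
  have h0 : MclPer σ 0 = 1 := by
    have := hcon 0 0
    simpa using this
  have hπeval : MclPer σ Real.pi = 1 := by
    have := hcon Real.pi 0
    simpa using this
  have hfrac0 : Int.fract ((0 : ℝ) / (2 * Real.pi)) = 0 := by
    simp
  have hhalf : Real.pi / (2 * Real.pi) = 1 / 2 := by
    field_simp
  have hfracπ : Int.fract (Real.pi / (2 * Real.pi)) = 1 / 2 := by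
    rw [hhalf]
    exact Int.fract_eq_self.mpr ⟨by norm_num, by norm_num⟩
  have e0 : Mcl σ 0 = 1 := by
    have h : MclPer σ 0 = Mcl σ 0 := by
      rw [MclPer, hfrac0]; norm_num
    rw [← h]; exact h0
  have eπ : Mcl σ Real.pi = 1 := by
    have h : MclPer σ Real.pi = Mcl σ Real.pi := by
      rw [MclPer, hfracπ]; ring_nf
    rw [← h]; exact hπeval
  rw [Mcl] at e0 eπ
  simp only [← hsb] at e0 eπ
  clear_value sb
  set E := Real.exp (2 * Real.pi / sb) with hE
  set P := Real.exp (Real.pi / sb) with hP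
  have hEP : E = P * P := by
    rw [hE, hP, ← Real.exp_add]; ring_nf
  have hP1 : 1 < P := by
    rw [hP, ← Real.exp_zero]
    exact Real.exp_lt_exp.mpr (div_pos hπ hsbpos)
  have hE1 : 1 < E := by nlinarith
  have hdpos : 0 < 2 * sb * (E - 1) := by nlinarith
  have hden : 2 * sb * (E - 1) ≠ 0 := hdpos.ne'
  have h1 : 1 + E = 2 * sb * (E - 1) := by
    have hz : Real.exp (0 / sb) = 1 := by norm_num
    have h2 : (2 * Real.pi - 0) / sb = 2 * Real.pi / sb := by ring_nf
    rw [hz, h2, ← hE] at e0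
    field_simp at e0
    rw [div_eq_iff (by linarith)] at e0; linarith
  have h2 : P + P = 2 * sb * (E - 1) := by
    have h3 : (2 * Real.pi - Real.pi) / sb = Real.pi / sb := by ring_nf
    rw [h3, ← hP] at eπ
    field_simp at eπ
    rw [div_eq_iff (by linarith)] at eπ; linarith
  nlinarith [sq_nonneg (P - 1)]
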